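/- Let f : ℝⁿ → ℝ be convex and differentiable with minimizer X⋆, and let X be a twice differentiable solution of 0 = Ẍ + (3/t)Ẋ + ∇f(X) on (0,∞) with X(t) → X₀, Ẋ(t) → 0 as t → 0⁺. Define E(t) = t²(f(X(t)) − f⋆) + (1/2)‖tẊ(t) + 2(X(t) − X⋆)‖² + ∫₀ᵗ 2s( f⋆ − f(X(s)) − ⟨∇f(X(s)), X⋆ − X(s)⟩ ) ds. Then E(t) = 2‖X₀ − X⋆‖² for all t > 0, i.e., E is a conserved quantity. -/

import Mathlib

open Filter MeasureTheory
open scoped RealInnerProductSpace Topology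

theorem agm_ode_conservation_law
    {E : Type*} [NormedAddCommGroup E] [InnerProductSpace ℝ E] [CompleteSpace E]
    (f : E → ℝ) (g : E → E)
    (hgrad : ∀ x, HasGradientAt f (g x) x)
    (hconv : ∀ x y, 0 ≤ f x - f y - ⟪g y, x - y⟫)
    (X X' X'' : ℝ → E)
    (hX' : ∀ t ∈ Set.Ioi (0:ℝ), HasDerivAt X (X' t) t)
    (hX'' : ∀ t ∈ Set.Ioi (0:ℝ), HasDerivAt X' (X'' t) t)
    (hODE : ∀ t ∈ Set.Ioi (0:ℝ), X'' t + (3 / t) • X' t + g (X t) = 0)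
    (X₀ : E) (hX0 : Tendsto X (𝓝[>] (0:ℝ)) (𝓝 X₀))
    (hXd0 : Tendsto X' (𝓝[>] (0:ℝ)) (𝓝 0))
    (Xs : E) (hmin : ∀ x, f Xs ≤ f x) :
    ∀ t > (0:ℝ),
      t ^ 2 * (f (X t) - f Xs)
        + (1 / 2) * ‖t • X' t + (2:ℝ) • (X t - Xs)‖ ^ 2
        + ∫ s in (0:ℝ)..t, 2 * s * (f Xs - f (X s) - ⟪g (X s), Xs - X s⟫)
      = 2 * ‖X₀ - Xs‖ ^ 2 := by
  intro t ht
  -- notation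
  set L : ℝ := 2 * ‖X₀ - Xs‖ ^ 2 with hL
  set V : ℝ → E := fun s => s • X' s + (2:ℝ) • (X s - Xs) with hV
  set φ : ℝ → ℝ := fun s => s ^ 2 * (f (X s) - f Xs) + (1/2) * ‖V s‖ ^ 2 with hφ
  set h : ℝ → ℝ := fun s => 2 * s * (f Xs - f (X s) - ⟪g (X s), Xs - X s⟫) with hh
  -- derivative of φ
  have hφderiv : ∀ s ∈ Set.Ioi (0:ℝ), HasDerivAt φ (-h s) s := by
    intro s hs
    have hs0 : (0:ℝ) < s := hs
    have hXs := hX' s hs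
    have hXds := hX'' s hs
    -- derivative of f ∘ X
    have hfX : HasDerivAt (fun u => f (X u)) ⟪g (X s), X' s⟫ s := by
      have := (hasGradientAt_iff_hasFDerivAt.mp (hgrad (X s))).comp_hasDerivAt s hXs
      simp at this; exact this
    -- derivative of V
    have hVd : HasDerivAt V ((X' s + s • X'' s) + (2:ℝ) • X' s) s := by
      have h1 : HasDerivAt (fun u : ℝ => u • X' u) (X' s + s • X'' s) s := by
        have := (hasDerivAt_id s).smul hXds
        simp [add_comm] at this; exact this
      have h2 : HasDerivAt (fun u => (2:ℝ) • (X u - Xs)) ((2:ℝ) • X' s) s :=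
        ((hXs.sub_const Xs).const_smul (2:ℝ))
      exact h1.add h2
    -- ODE gives V' = -s • g (X s)
    have hVval : (X' s + s • X'' s) + (2:ℝ) • X' s = -(s • g (X s)) := by
      have hode := hODE s hs
      have : s • (X'' s + (3 / s) • X' s + g (X s)) = s • (0:E) := by rw [hode]
      rw [smul_zero, smul_add, smul_add, smul_smul, mul_div_cancel₀ _ hs0.ne'] at this
      have h3 : s • X'' s + (3:ℝ) • X' s = -(s • g (X s)) := by
        have := this
        linear_combination (norm := module) this
      linear_combination (norm := module) h3
    -- derivative of ‖V‖²
    have hnorm : HasDerivAt (fun u => ‖V u‖ ^ 2)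
        (2 * ⟪V s, -(s • g (X s))⟫) s := by
      have hinner : HasDerivAt (fun u => ⟪V u, V u⟫)
          (⟪V s, (X' s + s • X'' s) + (2:ℝ) • X' s⟫ + ⟪(X' s + s • X'' s) + (2:ℝ) • X' s, V s⟫) s :=
        hVd.inner ℝ hVd
      have : HasDerivAt (fun u => ⟪V u, V u⟫) (2 * ⟪V s, -(s • g (X s))⟫) s := by
        convert hinner using 1
        rw [hVval, real_inner_comm]
        ring
      have heq : (fun u => ‖V u‖ ^ 2) = fun u => ⟪V u, V u⟫ := by
        funext u; rw [real_inner_self_eq_norm_sq]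
      rw [heq]
      exact this
    -- derivative of s² (f(X s) - f⋆)
    have hA : HasDerivAt (fun u : ℝ => u ^ 2 * (f (X u) - f Xs))
        (2 * s * (f (X s) - f Xs) + s ^ 2 * ⟪g (X s), X' s⟫) s := by
      have hsq : HasDerivAt (fun u : ℝ => u ^ 2) (2 * s) s := by
        simpa using hasDerivAt_pow 2 s
      have := hsq.mul (hfX.sub_const (f Xs))
      simp [mul_comm] at this ⊢; exact this
    have := hA.add ((hnorm.const_mul (1/2 : ℝ)))
    refine this.congr_deriv ?_
    have hexp : ⟪V s, -(s • g (X s))⟫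
        = -(s * (s * ⟪X' s, g (X s)⟫)) - 2 * (s * ⟪X s - Xs, g (X s)⟫) := by
      simp [hV, inner_add_left, inner_smul_left, inner_smul_right, real_inner_smul_left]
      ring
    rw [hexp]
    simp only [hh]
    have hsym : ⟪g (X s), Xs - X s⟫ = - ⟪X s - Xs, g (X s)⟫ := by
      rw [real_inner_comm]
      rw [show Xs - X s = -(X s - Xs) by abel, inner_neg_left]
    have hsym2 : ⟪g (X s), X' s⟫ = ⟪X' s, g (X s)⟫ := real_inner_comm _ _
    rw [hsym, hsym2]
    ring
  -- extend φ continuously to 0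
  set Φ : ℝ → ℝ := fun s => if s ≤ 0 then L else φ s with hΦ
  have hΦeq : ∀ s ∈ Set.Ioi (0:ℝ), Φ s = φ s := by
    intro s hs; simp [hΦ, not_le.mpr (Set.mem_Ioi.mp hs)]
  have hφ0 : Tendsto φ (𝓝[>] (0:ℝ)) (𝓝 L) := by
    have hfc : Continuous f := by
      have : Differentiable ℝ f := fun x => (hgrad x).differentiableAt
      exact this.continuous
    have h1 : Tendsto (fun s : ℝ => s ^ 2 * (f (X s) - f Xs)) (𝓝[>] (0:ℝ))
        (𝓝 ((0:ℝ) ^ 2 * (f X₀ - f Xs))) := by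
      apply Tendsto.mul
      · exact ((continuous_id.pow 2).tendsto 0).mono_left nhdsWithin_le_nhds
      · exact ((hfc.tendsto X₀).comp hX0).sub_const _
    have h2 : Tendsto V (𝓝[>] (0:ℝ)) (𝓝 ((2:ℝ) • (X₀ - Xs))) := by
      have hsm : Tendsto (fun s : ℝ => s • X' s) (𝓝[>] (0:ℝ)) (𝓝 ((0:ℝ) • (0:E))) :=
        Tendsto.smul (tendsto_id.mono_left nhdsWithin_le_nhds) hXd0
      have := hsm.add ((hX0.sub_const Xs).const_smul (2:ℝ))
      simpa using this
    have h3 : Tendsto (fun s => (1/2 : ℝ) * ‖V s‖ ^ 2) (𝓝[>] (0:ℝ))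
        (𝓝 ((1/2 : ℝ) * ‖(2:ℝ) • (X₀ - Xs)‖ ^ 2)) :=
      tendsto_const_nhds.mul ((h2.norm).pow 2)
    have := h1.add h3
    have hLeq : (0:ℝ) ^ 2 * (f X₀ - f Xs) + (1/2 : ℝ) * ‖(2:ℝ) • (X₀ - Xs)‖ ^ 2 = L := by
      rw [norm_smul]
      simp [hL]
      ring
    rw [hLeq] at this
    exact this
  have hΦcont : ContinuousOn Φ (Set.Icc 0 t) := by
    intro s hs
    rcases eq_or_lt_of_le hs.1 with rfl | hs0
    · -- continuity at 0 within Icc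
      have hΦ0 : Φ 0 = L := by simp [hΦ]
      rw [ContinuousWithinAt, hΦ0]
      have key : Tendsto Φ (𝓝[>] (0:ℝ)) (𝓝 L) := by
        apply hφ0.congr'
        filter_upwards [self_mem_nhdsWithin] with u hu
        exact (hΦeq u hu).symm
      have : Set.Icc (0:ℝ) t ⊆ {0} ∪ Set.Ioi 0 := by
        intro u hu
        rcases eq_or_lt_of_le hu.1 with rfl | h
        · exact Or.inl rfl
        · exact Or.inr h
      apply Tendsto.mono_left _ (nhdsWithin_mono _ this)
      rw [nhdsWithin_union, nhdsWithin_singleton]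
      apply Tendsto.sup
      · have : Tendsto Φ (pure (0:ℝ)) (𝓝 (Φ 0)) := tendsto_pure_nhds Φ 0
        rwa [hΦ0] at this
      · exact key
    · -- continuity at s > 0
      have hφc : ContinuousAt φ s := by
        have hd := hφderiv s hs0
        exact (hd).continuousAt
      have : ContinuousAt Φ s := by
        apply hφc.congr
        filter_upwards [Ioi_mem_nhds hs0] with u hu
        exact (hΦeq u hu).symm
      exact this.continuousWithinAt
  have hΦderiv : ∀ s ∈ Set.Ioo (0:ℝ) t, HasDerivAt Φ (-h s) s := by
    intro s hs
    apply (hφderiv s hs.1).congr_of_eventuallyEq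
    filter_upwards [Ioi_mem_nhds hs.1] with u hu
    exact hΦeq u hu
  -- nonnegativity of h
  have hpos : ∀ s ∈ Set.Ioo (0:ℝ) t, 0 ≤ h s := by
    intro s hs
    have := hconv Xs (X s)
    have h2s : 0 ≤ 2 * s := by linarith [hs.1]
    simpa [hh] using mul_nonneg h2s this
  -- FTC with automatic integrability for the antiderivative -Φ of h
  have hcontNeg : ContinuousOn (fun s => -Φ s) (Set.Icc 0 t) := hΦcont.neg
  have hderivNeg : ∀ s ∈ Set.Ioo (0:ℝ) t, HasDerivAt (fun u => -Φ u) (h s) s := by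
    intro s hs
    have := (hΦderiv s hs).neg; rw [neg_neg] at this; exact this
  have hint : IntervalIntegrable h volume 0 t := by
    apply intervalIntegral.intervalIntegrable_deriv_of_nonneg
    · rwa [Set.uIcc_of_le ht.le]
    · intro s hs
      rw [min_eq_left ht.le, max_eq_right ht.le] at hs
      exact hderivNeg s hs
    · intro s hs
      rw [min_eq_left ht.le, max_eq_right ht.le] at hs
      exact hpos s hs
  have hFTC : ∫ s in (0:ℝ)..t, h s = (fun u => -Φ u) t - (fun u => -Φ u) 0 :=
    intervalIntegral.integral_eq_sub_of_hasDerivAt_of_le ht.le hcontNeg hderivNeg hint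
  have hΦt : Φ t = φ t := hΦeq t ht
  have hΦzero : Φ 0 = L := by simp [hΦ]
  have : ∫ s in (0:ℝ)..t, h s = L - φ t := by
    rw [hFTC]; simp [hΦt, hΦzero]; ring
  calc t ^ 2 * (f (X t) - f Xs) + (1 / 2) * ‖t • X' t + (2:ℝ) • (X t - Xs)‖ ^ 2
        + ∫ s in (0:ℝ)..t, 2 * s * (f Xs - f (X s) - ⟪g (X s), Xs - X s⟫)
      = φ t + ∫ s in (0:ℝ)..t, h s := by rfl
    _ = φ t + (L - φ t) := by rw [this]
    _ = L := by ring
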